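/- Suppose Hypothesis (H) holds and there exists x₀ ∈ M∖Z with P(x₀,M) < 1. Then there exist n₀ ∈ ℕ and α ∈ (0,1) such that P^n(x,M) ≤ α^{⌊n/n₀⌋} for all x ∈ M and all n ∈ ℕ. In particular lim_{n→∞} P^n(x,M) = 0 for every x ∈ M, and the spectral radius of the Koopman operator 𝒫 on (C(M),‖·‖_∞) is strictly less than 1. -/

import Mathlib

open MeasureTheory Filter Topology

noncomputable section

variable {M : Type*}

/-- The iterated transition kernel: `iterP P 0 x = δ_x` (identity kernel), so that
`iterP P 1 = P` and `iterP P (n+1) x A = ∫ iterP P n y A ∂(P x)`. -/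
def iterP [MeasurableSpace M] (P : M → Measure M) : ℕ → M → Measure M
  | 0 => fun x => Measure.dirac x
  | n + 1 => fun x => (P x).bind (iterP P n)

/-- Hypothesis (H) of the paper: `P` is a measurable sub-Markovian kernel; (H1) each
`P x` is absolutely continuous w.r.t. `ρ` and `x ↦ dP(x,·)/dρ` is continuous into `L¹(ρ)`;
(H2) `ρ(M∖Z) > 0` where `Z = {x | P(x,M) = 0}`, and from every non-escaping point every
nonempty open set is reached with positive probability in some positive time. -/
structure HypH [MetricSpace M] [MeasurableSpace M] (P : M → Measure M) (ρ : Measure M) : Prop where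
  meas : Measurable P
  subMarkov : ∀ x, P x Set.univ ≤ 1
  absCont : ∀ x, P x ≪ ρ
  densityCont : ∀ ε : ℝ, 0 < ε → ∃ δ : ℝ, 0 < δ ∧ ∀ x z : M, dist x z < δ →
      (∫⁻ y, ((P x).rnDeriv ρ y - (P z).rnDeriv ρ y)
        + ((P z).rnDeriv ρ y - (P x).rnDeriv ρ y) ∂ρ) < ENNReal.ofReal ε
  rhoPos : 0 < ρ {x | P x Set.univ ≠ 0}
  irred : ∀ x, P x Set.univ ≠ 0 → ∀ A : Set M, IsOpen A → A.Nonempty →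
      ∃ n : ℕ, 0 < n ∧ 0 < iterP P n x A

section Aux

variable [MeasurableSpace M] {P : M → Measure M}

lemma measurable_iterP (hP : Measurable P) (n : ℕ) : Measurable (iterP P n) := by
  induction n with
  | zero => exact Measure.measurable_dirac
  | succ n ih => exact (Measure.measurable_bind' ih).comp hP

lemma iterP_one (x : M) : iterP P 1 x = P x := by
  show (P x).bind (fun y => Measure.dirac y) = P x
  exact Measure.bind_dirac

lemma iterP_succ_univ (hP : Measurable P) (n : ℕ) (x : M) :
    iterP P (n + 1) x Set.univ = ∫⁻ y, iterP P n y Set.univ ∂ P x := by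
  show ((P x).bind (iterP P n)) Set.univ = _
  exact Measure.bind_apply MeasurableSet.univ (measurable_iterP hP n).aemeasurable

lemma iterP_univ_le_one (hP : Measurable P) (hsub : ∀ x, P x Set.univ ≤ 1) (n : ℕ) (x : M) :
    iterP P n x Set.univ ≤ 1 := by
  induction n generalizing x with
  | zero => simp [iterP]
  | succ n ih =>
    rw [iterP_succ_univ hP]
    calc ∫⁻ y, iterP P n y Set.univ ∂ P x ≤ ∫⁻ _, 1 ∂ P x := lintegral_mono fun y => ih y
    _ = P x Set.univ := lintegral_one
    _ ≤ 1 := hsub x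

lemma iterP_add (hP : Measurable P) (m n : ℕ) (x : M) :
    iterP P (m + n) x = (iterP P m x).bind (iterP P n) := by
  induction m generalizing x with
  | zero =>
    rw [Nat.zero_add]
    show iterP P n x = (Measure.dirac x).bind (iterP P n)
    rw [Measure.dirac_bind (measurable_iterP hP n)]
  | succ m ih =>
    rw [show m + 1 + n = (m + n) + 1 by omega]
    show (P x).bind (iterP P (m + n)) = ((P x).bind (iterP P m)).bind (iterP P n)
    rw [Measure.bind_bind (measurable_iterP hP m).aemeasurable (measurable_iterP hP n).aemeasurable]
    exact congrArg _ (funext fun y => (ih y).symm) |>.symm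

lemma iterP_univ_antitone (hP : Measurable P) (hsub : ∀ x, P x Set.univ ≤ 1) (x : M) :
    Antitone fun n => iterP P n x Set.univ := by
  apply antitone_nat_of_succ_le
  intro n
  show iterP P (n + 1) x Set.univ ≤ _
  rw [iterP_add hP n 1 x, Measure.bind_apply MeasurableSet.univ (measurable_iterP hP 1).aemeasurable]
  calc ∫⁻ y, iterP P 1 y Set.univ ∂ iterP P n x
      ≤ ∫⁻ _, 1 ∂ iterP P n x := lintegral_mono fun y => by rw [iterP_one]; exact hsub y
    _ = iterP P n x Set.univ := lintegral_one

end Aux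

section Cont
open scoped ENNReal

variable [MetricSpace M] [MeasurableSpace M] {P : M → Measure M} {ρ : Measure M}
  [IsFiniteMeasure ρ]

lemma finP (hH : HypH P ρ) (x : M) : IsFiniteMeasure (P x) :=
  ⟨lt_of_le_of_lt (hH.subMarkov x) ENNReal.one_lt_top⟩

lemma cont_aux (hH : HypH P ρ) {h : M → ℝ≥0∞} (hm : Measurable h) (hle : ∀ y, h y ≤ 1) :
    Continuous fun x => (∫⁻ y, h y ∂ P x).toReal := by
  have hIle : ∀ w : M, (∫⁻ y, h y ∂ P w) ≤ 1 := fun w =>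
    calc ∫⁻ y, h y ∂ P w ≤ ∫⁻ _, 1 ∂ P w := lintegral_mono hle
      _ = P w Set.univ := lintegral_one
      _ ≤ 1 := hH.subMarkov w
  have hIne : ∀ w : M, (∫⁻ y, h y ∂ P w) ≠ ∞ := fun w =>
    (lt_of_le_of_lt (hIle w) ENNReal.one_lt_top).ne
  rw [Metric.continuous_iff]
  intro x ε hε
  obtain ⟨δ, hδ, hδ'⟩ := hH.densityCont ε hε
  refine ⟨δ, hδ, fun z hz => ?_⟩
  have key : ∀ a b : M, dist a b < δ →
      (∫⁻ y, h y ∂ P a) < (∫⁻ y, h y ∂ P b) + ENNReal.ofReal ε := by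
    intro a b hab
    haveI := finP hH a
    haveI := finP hH b
    have ha : (∫⁻ y, h y ∂ P a) = ∫⁻ y, (P a).rnDeriv ρ y * h y ∂ρ :=
      (lintegral_rnDeriv_mul (hH.absCont a) hm.aemeasurable).symm
    have hb : (∫⁻ y, h y ∂ P b) = ∫⁻ y, (P b).rnDeriv ρ y * h y ∂ρ :=
      (lintegral_rnDeriv_mul (hH.absCont b) hm.aemeasurable).symm
    have hmb : Measurable fun y => (P b).rnDeriv ρ y * h y :=
      (Measure.measurable_rnDeriv _ _).mul hm
    have hpt : ∀ y, (P a).rnDeriv ρ y * h y ≤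
        (P b).rnDeriv ρ y * h y + ((P a).rnDeriv ρ y - (P b).rnDeriv ρ y) := by
      intro y
      calc (P a).rnDeriv ρ y * h y
          ≤ ((P b).rnDeriv ρ y + ((P a).rnDeriv ρ y - (P b).rnDeriv ρ y)) * h y :=
            mul_le_mul_left le_add_tsub _
        _ = (P b).rnDeriv ρ y * h y + ((P a).rnDeriv ρ y - (P b).rnDeriv ρ y) * h y := by
            rw [add_mul]
        _ ≤ (P b).rnDeriv ρ y * h y + ((P a).rnDeriv ρ y - (P b).rnDeriv ρ y) := by
            gcongr
            calc ((P a).rnDeriv ρ y - (P b).rnDeriv ρ y) * h y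
                ≤ ((P a).rnDeriv ρ y - (P b).rnDeriv ρ y) * 1 := mul_le_mul_right (hle y) _
              _ = _ := mul_one _
    have hD : (∫⁻ y, ((P a).rnDeriv ρ y - (P b).rnDeriv ρ y) ∂ρ) < ENNReal.ofReal ε := by
      refine lt_of_le_of_lt (lintegral_mono fun y => ?_) (hδ' a b hab)
      exact le_self_add
    calc (∫⁻ y, h y ∂ P a)
        ≤ ∫⁻ y, ((P b).rnDeriv ρ y * h y + ((P a).rnDeriv ρ y - (P b).rnDeriv ρ y)) ∂ρ := by
          rw [ha]; exact lintegral_mono hpt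
      _ = (∫⁻ y, (P b).rnDeriv ρ y * h y ∂ρ)
            + ∫⁻ y, ((P a).rnDeriv ρ y - (P b).rnDeriv ρ y) ∂ρ := lintegral_add_left hmb _
      _ < (∫⁻ y, h y ∂ P b) + ENNReal.ofReal ε := by
          rw [← hb]
          exact ENNReal.add_lt_add_left (hIne b) hD
  have h1 := key z x hz
  have h2 := key x z (by rwa [dist_comm] at hz)
  rw [Real.dist_eq, abs_sub_lt_iff]
  constructor
  · have := ENNReal.toReal_lt_toReal (hIne z) (by
      exact ENNReal.add_ne_top.2 ⟨hIne x, ENNReal.ofReal_ne_top⟩) |>.2 h1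
    rw [ENNReal.toReal_add (hIne x) ENNReal.ofReal_ne_top, ENNReal.toReal_ofReal hε.le] at this
    linarith
  · have := ENNReal.toReal_lt_toReal (hIne x) (by
      exact ENNReal.add_ne_top.2 ⟨hIne z, ENNReal.ofReal_ne_top⟩) |>.2 h2
    rw [ENNReal.toReal_add (hIne z) ENNReal.ofReal_ne_top, ENNReal.toReal_ofReal hε.le] at this
    linarith

lemma cont_iterP (hH : HypH P ρ) (n : ℕ) :
    Continuous fun x => (iterP P (n + 1) x Set.univ).toReal := by
  simp only [iterP_succ_univ hH.meas n]
  exact cont_aux hH ((Measure.measurable_coe MeasurableSet.univ).comp (measurable_iterP hH.meas n))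
    (fun y => iterP_univ_le_one hH.meas hH.subMarkov n y)

lemma cont_m (hH : HypH P ρ) : Continuous fun x => (P x Set.univ).toReal := by
  have := cont_iterP hH 0
  simp only [iterP_succ_univ hH.meas 0] at this ⊢
  have h : ∀ x : M, (∫⁻ y, iterP P 0 y Set.univ ∂ P x) = P x Set.univ := by
    intro x
    have : ∀ y : M, iterP P 0 y Set.univ = 1 := fun y => by simp [iterP]
    simp only [this, lintegral_one]
  simpa only [h] using this

end Cont

/-- **Proposition (uniform escape).** Under Hypothesis (H), if some non-escaping point
`x₀` has `P(x₀,M) < 1`, then there are `n₀ ∈ ℕ` and `α ∈ (0,1)` with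
`Pⁿ(x,M) ≤ α^⌊n/n₀⌋` for all `x` and `n`; in particular `Pⁿ(x,M) → 0` for every `x`, and
the spectral radius of the Koopman operator is `< 1`. -/
theorem uniform_escape_of_hypH
    [MetricSpace M] [CompactSpace M] [MeasurableSpace M] [BorelSpace M]
    (ρ : Measure M) [IsFiniteMeasure ρ] (P : M → Measure M) (hH : HypH P ρ)
    (x₀ : M) (hx₀ : P x₀ Set.univ ≠ 0) (hx₀lt : P x₀ Set.univ < 1)
    (T : C(M, ℝ) →L[ℝ] C(M, ℝ)) (hT : ∀ (f : C(M, ℝ)) (x : M), T f x = ∫ y, f y ∂(P x)) :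
    (∃ n₀ : ℕ, 0 < n₀ ∧ ∃ α : ℝ, 0 < α ∧ α < 1 ∧
      ∀ (x : M) (n : ℕ), iterP P n x Set.univ ≤ ENNReal.ofReal (α ^ (n / n₀))) ∧
    (∀ x : M, Tendsto (fun n : ℕ => iterP P n x Set.univ) atTop (𝓝 0)) ∧
    spectralRadius ℝ T < 1 := by
  have hMne : Nonempty M := ⟨x₀⟩
  have hF1 : ∀ (n : ℕ) (x : M), iterP P n x Set.univ ≤ 1 :=
    iterP_univ_le_one hH.meas hH.subMarkov
  have hFne : ∀ (n : ℕ) (x : M), iterP P n x Set.univ ≠ ⊤ :=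
    fun n x => (lt_of_le_of_lt (hF1 n x) ENNReal.one_lt_top).ne
  have hanti : ∀ x : M, Antitone fun n => iterP P n x Set.univ :=
    iterP_univ_antitone hH.meas hH.subMarkov
  -- pointwise strict escape
  have exist : ∀ x : M, ∃ n : ℕ, 0 < n ∧ iterP P n x Set.univ < 1 := by
    intro x
    by_cases hx : P x Set.univ = 0
    · refine ⟨1, one_pos, ?_⟩
      rw [iterP_one, hx]
      exact zero_lt_one
    · obtain ⟨β, hβ1, hβ2⟩ := exists_between
        (show (P x₀ Set.univ).toReal < 1 by
          rw [← ENNReal.toReal_one]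
          exact (ENNReal.toReal_lt_toReal ((lt_of_lt_of_le hx₀lt le_top).ne)
            ENNReal.one_ne_top).2 hx₀lt)
      set B : Set M := {z | (P z Set.univ).toReal < β} with hB
      have hBopen : IsOpen B := isOpen_lt (cont_m hH) continuous_const
      have hBmeas : MeasurableSet B := hBopen.measurableSet
      obtain ⟨n, hn, hpos⟩ := hH.irred x hx B hBopen ⟨x₀, hβ1⟩
      refine ⟨n + 1, Nat.succ_pos _, ?_⟩
      set μ := iterP P n x with hμ
      have hμB : μ B ≠ ⊤ := ((le_trans (measure_mono (Set.subset_univ B)) (hF1 n x)).trans_lt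
        ENNReal.one_lt_top).ne
      have hμBc : μ Bᶜ ≠ ⊤ := ((le_trans (measure_mono (Set.subset_univ Bᶜ)) (hF1 n x)).trans_lt
        ENNReal.one_lt_top).ne
      have heq : iterP P (n + 1) x Set.univ = ∫⁻ y, P y Set.univ ∂μ := by
        rw [iterP_add hH.meas n 1 x,
          Measure.bind_apply MeasurableSet.univ (measurable_iterP hH.meas 1).aemeasurable]
        exact lintegral_congr fun y => by rw [iterP_one]
      have hle : (∫⁻ y, P y Set.univ ∂μ) ≤
          ∫⁻ y, (B.indicator (fun _ => ENNReal.ofReal β) y + Bᶜ.indicator 1 y) ∂μ := by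
        refine lintegral_mono fun y => ?_
        by_cases hy : y ∈ B
        · rw [Set.indicator_of_mem hy, Set.indicator_of_notMem (by simpa using hy), add_zero]
          exact le_of_lt ((ENNReal.lt_ofReal_iff_toReal_lt
            ((lt_of_le_of_lt (hH.subMarkov y) ENNReal.one_lt_top).ne)).2 hy)
        · rw [Set.indicator_of_notMem hy, Set.indicator_of_mem (by simpa using hy), zero_add]
          exact hH.subMarkov y
      have hsum : (∫⁻ y, (B.indicator (fun _ => ENNReal.ofReal β) y + Bᶜ.indicator 1 y) ∂μ)
          = ENNReal.ofReal β * μ B + μ Bᶜ := by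
        rw [lintegral_add_left (measurable_const.indicator hBmeas),
          lintegral_indicator_const hBmeas, lintegral_indicator_one hBmeas.compl]
      have hstrict : ENNReal.ofReal β * μ B + μ Bᶜ < 1 := by
        have h1 : ENNReal.ofReal β * μ B < μ B := by
          have : ENNReal.ofReal β * μ B < 1 * μ B :=
            (ENNReal.mul_lt_mul_left (ne_of_gt hpos) hμB)
              (by simpa using ENNReal.ofReal_lt_one.2 hβ2)
          simpa using this
        calc ENNReal.ofReal β * μ B + μ Bᶜ < μ B + μ Bᶜ := ENNReal.add_lt_add_right hμBc h1
          _ = μ Set.univ := measure_add_measure_compl hBmeas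
          _ ≤ 1 := hF1 n x
      calc iterP P (n + 1) x Set.univ = ∫⁻ y, P y Set.univ ∂μ := heq
        _ ≤ _ := hle
        _ = ENNReal.ofReal β * μ B + μ Bᶜ := hsum
        _ < 1 := hstrict
  -- compactness: uniform n₀, θ
  choose nn hnnpos hnnlt using exist
  have htlt1 : ∀ x : M, (iterP P (nn x) x Set.univ).toReal < 1 := by
    intro x
    rw [← ENNReal.toReal_one]
    exact (ENNReal.toReal_lt_toReal (hFne _ _) ENNReal.one_ne_top).2 (hnnlt x)
  set θf : M → ℝ := fun x => ((iterP P (nn x) x Set.univ).toReal + 1) / 2 with hθf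
  set U : M → Set M := fun x => {z | (iterP P (nn x) z Set.univ).toReal < θf x} with hU
  have hcont : ∀ x : M, Continuous fun z => (iterP P (nn x) z Set.univ).toReal := by
    intro x
    have := cont_iterP hH (nn x - 1)
    rwa [show nn x - 1 + 1 = nn x by have := hnnpos x; omega] at this
  have hUopen : ∀ x, IsOpen (U x) := fun x => isOpen_lt (hcont x) continuous_const
  have hxU : ∀ x, x ∈ U x := fun x => by
    have := htlt1 x
    simp only [hU, hθf, Set.mem_setOf_eq]
    linarith
  have hθf1 : ∀ x, θf x < 1 := fun x => by
    have := htlt1 x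
    rw [hθf]; dsimp only; linarith
  have hθfpos : ∀ x, (1:ℝ)/2 ≤ θf x := fun x => by
    have : 0 ≤ (iterP P (nn x) x Set.univ).toReal := ENNReal.toReal_nonneg
    rw [hθf]; dsimp only; linarith
  obtain ⟨t, ht⟩ := isCompact_univ.elim_finite_subcover U hUopen
    (fun x _ => Set.mem_iUnion.2 ⟨x, hxU x⟩)
  have htne : t.Nonempty := by
    obtain ⟨i, hi⟩ := Set.mem_iUnion.1 (ht (Set.mem_univ x₀))
    obtain ⟨hit, _⟩ := Set.mem_iUnion.1 hi
    exact ⟨i, hit⟩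
  set n₀ : ℕ := t.sup nn with hn₀
  set θ : ℝ := t.sup' htne θf with hθdef
  obtain ⟨i₀, hi₀⟩ := id htne
  have hn₀pos : 0 < n₀ := lt_of_lt_of_le (hnnpos i₀) (Finset.le_sup hi₀)
  have hθpos : 0 < θ := lt_of_lt_of_le (by linarith [hθfpos i₀])
    (Finset.le_sup' θf hi₀)
  have hθ1 : θ < 1 := Finset.sup'_lt_iff htne |>.2 fun i _ => hθf1 i
  -- uniform bound at time n₀
  have hunif : ∀ x : M, iterP P n₀ x Set.univ ≤ ENNReal.ofReal θ := by
    intro x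
    obtain ⟨i, hi⟩ := Set.mem_iUnion.1 (ht (Set.mem_univ x))
    obtain ⟨hit, hxUi⟩ := Set.mem_iUnion.1 hi
    have h1 : iterP P n₀ x Set.univ ≤ iterP P (nn i) x Set.univ :=
      hanti x (Finset.le_sup hit)
    refine le_trans h1 ?_
    rw [← ENNReal.ofReal_toReal (hFne (nn i) x)]
    refine ENNReal.ofReal_le_ofReal ?_
    exact le_trans (le_of_lt hxUi) (Finset.le_sup' θf hit)
  -- main geometric bound
  have main : ∀ (n : ℕ) (x : M), iterP P n x Set.univ ≤ ENNReal.ofReal (θ ^ (n / n₀)) := by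
    intro n
    induction n using Nat.strong_induction_on with
    | _ n ih =>
      intro x
      rcases lt_or_ge n n₀ with h | h
      · rw [Nat.div_eq_of_lt h, pow_zero, ENNReal.ofReal_one]
        exact hF1 n x
      · obtain ⟨m, rfl⟩ := Nat.exists_eq_add_of_le h
        have hmlt : m < n₀ + m := by omega
        have key : iterP P (n₀ + m) x Set.univ
            = ∫⁻ y, iterP P m y Set.univ ∂ iterP P n₀ x := by
          rw [iterP_add hH.meas n₀ m x,
            Measure.bind_apply MeasurableSet.univ (measurable_iterP hH.meas m).aemeasurable]
        rw [key]
        calc ∫⁻ y, iterP P m y Set.univ ∂ iterP P n₀ x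
            ≤ ∫⁻ _, ENNReal.ofReal (θ ^ (m / n₀)) ∂ iterP P n₀ x :=
              lintegral_mono fun y => ih m hmlt y
          _ = ENNReal.ofReal (θ ^ (m / n₀)) * iterP P n₀ x Set.univ := lintegral_const _
          _ ≤ ENNReal.ofReal (θ ^ (m / n₀)) * ENNReal.ofReal θ :=
              mul_le_mul_right (hunif x) _
          _ = ENNReal.ofReal (θ ^ (m / n₀) * θ) :=
              (ENNReal.ofReal_mul (pow_nonneg hθpos.le _)).symm
          _ = ENNReal.ofReal (θ ^ ((n₀ + m) / n₀)) := by
              rw [← pow_succ, show (n₀ + m) / n₀ = m / n₀ + 1 by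
                rw [Nat.add_comm n₀ m, Nat.add_div_right _ hn₀pos]]
  -- tendsto
  have htend : ∀ x : M, Tendsto (fun n : ℕ => iterP P n x Set.univ) atTop (𝓝 0) := by
    intro x
    have hdiv : Tendsto (fun n : ℕ => n / n₀) atTop atTop := by
      apply Filter.tendsto_atTop_atTop.2
      intro b
      refine ⟨n₀ * b, fun n hn => (Nat.le_div_iff_mul_le hn₀pos).2 ?_⟩
      rwa [Nat.mul_comm]
    have hpow : Tendsto (fun k : ℕ => θ ^ k) atTop (𝓝 0) :=
      tendsto_pow_atTop_nhds_zero_of_lt_one hθpos.le hθ1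
    have h0 : Tendsto (fun n : ℕ => ENNReal.ofReal (θ ^ (n / n₀))) atTop (𝓝 0) := by
      rw [show (0 : ENNReal) = ENNReal.ofReal 0 by simp]
      exact (ENNReal.continuous_ofReal.tendsto 0).comp (hpow.comp hdiv)
    exact tendsto_of_tendsto_of_tendsto_of_le_of_le tendsto_const_nhds h0
      (fun n => zero_le) (fun n => main n x)
  -- operator norm bound
  have hTn : ∀ (n : ℕ) (f : C(M, ℝ)) (x : M),
      |(T ^ n) f x| ≤ ‖f‖ * (iterP P n x Set.univ).toReal := by
    intro n
    induction n with
    | zero =>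
      intro f x
      have h0 : iterP P 0 x Set.univ = 1 := by simp [iterP]
      rw [pow_zero, h0, ENNReal.toReal_one, mul_one, ContinuousLinearMap.one_apply,
        ← Real.norm_eq_abs]
      exact ContinuousMap.norm_coe_le_norm f x
    | succ n ih =>
      intro f x
      haveI := finP hH x
      have hfin : ∀ y : M, iterP P n y Set.univ < ⊤ :=
        fun y => lt_of_le_of_lt (hF1 n y) ENNReal.one_lt_top
      have hmeasF : Measurable fun y : M => (iterP P n y Set.univ).toReal :=
        ENNReal.measurable_toReal.comp
          ((Measure.measurable_coe MeasurableSet.univ).comp (measurable_iterP hH.meas n))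
      have happ : (T ^ (n + 1)) f x = ∫ y, (T ^ n) f y ∂ P x := by
        rw [pow_succ']
        exact hT ((T ^ n) f) x
      have hint1 : Integrable (fun y => |(T ^ n) f y|) (P x) := by
        refine ⟨(((T ^ n) f).continuous.abs).aestronglyMeasurable, ?_⟩
        apply HasFiniteIntegral.of_bounded (C := ‖(T ^ n) f‖)
        filter_upwards with y
        rw [Real.norm_eq_abs, abs_abs, ← Real.norm_eq_abs]
        exact ContinuousMap.norm_coe_le_norm _ y
      have hint2 : Integrable (fun y => ‖f‖ * (iterP P n y Set.univ).toReal) (P x) := by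
        refine ⟨(hmeasF.const_mul ‖f‖).aestronglyMeasurable, ?_⟩
        apply HasFiniteIntegral.of_bounded (C := ‖f‖)
        filter_upwards with y
        rw [Real.norm_eq_abs, abs_mul, abs_of_nonneg (norm_nonneg f),
          abs_of_nonneg ENNReal.toReal_nonneg]
        calc ‖f‖ * (iterP P n y Set.univ).toReal ≤ ‖f‖ * 1 := by
              refine mul_le_mul_of_nonneg_left ?_ (norm_nonneg f)
              exact ENNReal.toReal_le_of_le_ofReal zero_le_one (by simpa using hF1 n y)
          _ = ‖f‖ := mul_one _
      calc |(T ^ (n + 1)) f x| = |∫ y, (T ^ n) f y ∂ P x| := by rw [happ]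
        _ ≤ ∫ y, |(T ^ n) f y| ∂ P x := by
            rw [← Real.norm_eq_abs]
            exact (norm_integral_le_integral_norm _).trans (le_of_eq (by simp [Real.norm_eq_abs]))
        _ ≤ ∫ y, ‖f‖ * (iterP P n y Set.univ).toReal ∂ P x :=
            integral_mono hint1 hint2 fun y => ih f y
        _ = ‖f‖ * ∫ y, (iterP P n y Set.univ).toReal ∂ P x := integral_const_mul _ _
        _ = ‖f‖ * (∫⁻ y, iterP P n y Set.univ ∂ P x).toReal := by
            have hmeas' : AEMeasurable (fun y : M => iterP P n y Set.univ) (P x) :=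
              ((Measure.measurable_coe MeasurableSet.univ).comp
                (measurable_iterP hH.meas n)).aemeasurable
            rw [integral_toReal hmeas' (ae_of_all _ hfin)]
        _ = ‖f‖ * (iterP P (n + 1) x Set.univ).toReal := by
            rw [← iterP_succ_univ hH.meas n x]
  have hTn₀ : ‖T ^ n₀‖ ≤ θ := by
    refine ContinuousLinearMap.opNorm_le_bound _ hθpos.le fun f => ?_
    rw [ContinuousMap.norm_le _ (mul_nonneg hθpos.le (norm_nonneg f))]
    intro x
    rw [Real.norm_eq_abs]
    calc |(T ^ n₀) f x| ≤ ‖f‖ * (iterP P n₀ x Set.univ).toReal := hTn n₀ f x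
      _ ≤ ‖f‖ * θ := mul_le_mul_of_nonneg_left
          (ENNReal.toReal_le_of_le_ofReal hθpos.le (hunif x)) (norm_nonneg f)
      _ = θ * ‖f‖ := mul_comm _ _
  -- spectral radius
  have hsr : spectralRadius ℝ T < 1 := by
    obtain ⟨k, hk⟩ : ∃ k, n₀ = k + 1 := ⟨n₀ - 1, (Nat.succ_pred_eq_of_pos hn₀pos).symm⟩
    have h1 := spectrum.spectralRadius_le_pow_nnnorm_pow_one_div ℝ T k
    have hnorm : (‖T ^ (k + 1)‖₊ : ENNReal) ≤ ENNReal.ofReal θ := by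
      rw [← enorm_eq_nnnorm, ← ofReal_norm]
      exact ENNReal.ofReal_le_ofReal (by rw [← hk]; exact hTn₀)
    have hone : (‖(1 : C(M, ℝ) →L[ℝ] C(M, ℝ))‖₊ : ENNReal) ≤ 1 := by
      rw [← enorm_eq_nnnorm, ← ofReal_norm]
      calc ENNReal.ofReal ‖(1 : C(M, ℝ) →L[ℝ] C(M, ℝ))‖ ≤ ENNReal.ofReal 1 :=
            ENNReal.ofReal_le_ofReal (ContinuousLinearMap.norm_id_le)
        _ = 1 := ENNReal.ofReal_one
    have hexp : (0:ℝ) < 1 / (k + 1) := by positivity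
    calc spectralRadius ℝ T
        ≤ (‖T ^ (k + 1)‖₊ : ENNReal) ^ (1 / (k + 1) : ℝ)
          * (‖(1 : C(M, ℝ) →L[ℝ] C(M, ℝ))‖₊ : ENNReal) ^ (1 / (k + 1) : ℝ) := h1
      _ ≤ (ENNReal.ofReal θ) ^ (1 / (k + 1) : ℝ) * 1 ^ (1 / (k + 1) : ℝ) :=
          mul_le_mul' (ENNReal.rpow_le_rpow hnorm hexp.le) (ENNReal.rpow_le_rpow hone hexp.le)
      _ = (ENNReal.ofReal θ) ^ (1 / (k + 1) : ℝ) := by rw [ENNReal.one_rpow, mul_one]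
      _ < 1 := ENNReal.rpow_lt_one (ENNReal.ofReal_lt_one.2 hθ1) hexp
  exact ⟨⟨n₀, hn₀pos, θ, hθpos, hθ1, fun x n => main n x⟩, htend, hsr⟩
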